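/- Let Ω be a set, Ω* the free monoid on Ω, H ⊆ Ω*×Ω* a finite symmetric set, and ρ = ⟨H⟩. Suppose a, u, b, v ∈ Ω* are such that the quadruple (a,u;b,v) is irreducible with respect to ρ. Then au is ρ-related to a, to b, or to some c ∈ Ω* for which (c,d) ∈ H for some d; that is, (au, w) ∈ ρ for some w ∈ {a, b} ∪ {c : (c,d) ∈ H for some d}. -/

import Mathlib

/-- A right congruence on a monoid `S`: an equivalence relation compatible with
right multiplication. -/
def IsRightCong {S : Type*} [Monoid S] (ρ : Set (S × S)) : Prop :=
  Equivalence (fun a b : S => (a, b) ∈ ρ) ∧ ∀ u v t : S, (u, v) ∈ ρ → (u * t, v * t) ∈ ρ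

/-- The right congruence generated by a set `H` of pairs: the smallest right
congruence containing `H`. -/
def rcGen {S : Type*} [Monoid S] (H : Set (S × S)) : Set (S × S) :=
  ⋂₀ {ρ : Set (S × S) | IsRightCong ρ ∧ H ⊆ ρ}

/-- A quadruple `(a,u;b,v)` is irreducible with respect to the right congruence
`ρ` if `(au, bv) ∈ ρ` and for every common nonempty suffix `x` of `u` and `v`
(so `u = u'x`, `v = v'x`) we have `(au x⁻¹, bv x⁻¹) = (au', bv') ∉ ρ`. -/
def IrreducibleQuad {Ω : Type*} (ρ : Set (FreeMonoid Ω × FreeMonoid Ω))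
    (a u b v : FreeMonoid Ω) : Prop :=
  (a * u, b * v) ∈ ρ ∧
    ∀ x u' v' : FreeMonoid Ω, x ≠ 1 → u = u' * x → v = v' * x →
      (a * u', b * v') ∉ ρ

namespace RcGenAux

variable {Ω : Type*} (H : Set (FreeMonoid Ω × FreeMonoid Ω))

/-- One rewriting step. -/
def step (s t : FreeMonoid Ω) : Prop :=
  ∃ p q r : FreeMonoid Ω, (p, q) ∈ H ∧ s = p * r ∧ t = q * r

lemma step_mul {s t : FreeMonoid Ω} (m : FreeMonoid Ω) (h : step H s t) :
    step H (s * m) (t * m) := by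
  obtain ⟨p, q, r, hpq, hs, ht⟩ := h
  exact ⟨p, q, r * m, hpq, by rw [hs, mul_assoc], by rw [ht, mul_assoc]⟩

lemma step_symm (hsym : ∀ p : FreeMonoid Ω × FreeMonoid Ω, p ∈ H → (p.2, p.1) ∈ H)
    {s t : FreeMonoid Ω} (h : step H s t) : step H t s := by
  obtain ⟨p, q, r, hpq, hs, ht⟩ := h
  exact ⟨q, p, r, hsym _ hpq, ht, hs⟩

lemma rtg_isRightCong (hsym : ∀ p : FreeMonoid Ω × FreeMonoid Ω, p ∈ H → (p.2, p.1) ∈ H) :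
    IsRightCong {x : FreeMonoid Ω × FreeMonoid Ω | Relation.ReflTransGen (step H) x.1 x.2} := by
  constructor
  · constructor
    · intro s; exact Relation.ReflTransGen.refl
    · intro s t h
      haveI : Std.Symm (step H) := ⟨fun _ _ hh => step_symm H hsym hh⟩
      exact Std.Symm.symm (r := Relation.ReflTransGen (step H)) _ _ h
    · intro s t w h1 h2; exact h1.trans h2
  · intro s t m h
    exact Relation.ReflTransGen.lift (· * m) (fun _ _ hh => step_mul H m hh) _ _ h

lemma H_sub_rtg : H ⊆ {x : FreeMonoid Ω × FreeMonoid Ω |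
    Relation.ReflTransGen (step H) x.1 x.2} := by
  rintro ⟨p, q⟩ hpq
  exact Relation.ReflTransGen.single ⟨p, q, 1, hpq, (mul_one p).symm, (mul_one q).symm⟩

lemma rcGen_eq (hsym : ∀ p : FreeMonoid Ω × FreeMonoid Ω, p ∈ H → (p.2, p.1) ∈ H) :
    rcGen H = {x : FreeMonoid Ω × FreeMonoid Ω | Relation.ReflTransGen (step H) x.1 x.2} := by
  apply le_antisymm
  · exact Set.sInter_subset_of_mem ⟨rtg_isRightCong H hsym, H_sub_rtg H⟩
  · rintro ⟨s, t⟩ h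
    replace h : Relation.ReflTransGen (step H) s t := h
    intro ρ hρ
    obtain ⟨⟨heq, hmul⟩, hH⟩ := hρ
    induction h with
    | refl => exact heq.refl s
    | tail _hab hbc ih =>
      obtain ⟨p, q, r, hpq, hb, hc⟩ := hbc
      exact heq.trans ih (by rw [hb, hc]; exact hmul p q r (hH hpq))

lemma exists_concat {w : FreeMonoid Ω} (hw : w ≠ 1) :
    ∃ (w' : FreeMonoid Ω) (x : Ω), w = w' * FreeMonoid.of x := by
  rcases List.eq_nil_or_concat (FreeMonoid.toList w) with h | ⟨L, x, h⟩
  · exact absurd (FreeMonoid.toList.injective (by simpa using h)) hw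
  · refine ⟨FreeMonoid.ofList L, x, FreeMonoid.toList.injective ?_⟩
    simpa using h

lemma concat_inj {s t : FreeMonoid Ω} {x y : Ω}
    (h : s * FreeMonoid.of x = t * FreeMonoid.of y) : s = t ∧ x = y := by
  have h' : FreeMonoid.toList s ++ [x] = FreeMonoid.toList t ++ [y] := by
    have := congrArg FreeMonoid.toList h
    simpa using this
  obtain ⟨h1, h2⟩ := List.append_inj' h' rfl
  exact ⟨FreeMonoid.toList.injective h1, by simpa using h2⟩

lemma of_ne_one (x : Ω) : FreeMonoid.of x ≠ 1 := by
  intro h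
  have := congrArg FreeMonoid.toList h
  simp at this

/-- Key lemma: along a rewriting chain starting at `s * of x`, either the final
word still ends in `x` and the chain descends to the prefixes, or at some point
the whole word gets rewritten, so the chain visits a left component of `H`. -/
lemma key {w₁ w₂ : FreeMonoid Ω} (h : Relation.ReflTransGen (step H) w₁ w₂) :
    ∀ (x : Ω) (s : FreeMonoid Ω), w₁ = s * FreeMonoid.of x →
    (∃ t, w₂ = t * FreeMonoid.of x ∧ Relation.ReflTransGen (step H) s t) ∨
    ∃ p, (∃ q, (p, q) ∈ H) ∧ Relation.ReflTransGen (step H) w₁ p := by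
  induction h using Relation.ReflTransGen.head_induction_on with
  | refl =>
    intro x s hs
    exact Or.inl ⟨s, hs, Relation.ReflTransGen.refl⟩
  | head hstep hrest ih =>
    intro x s hs
    obtain ⟨p, q, r, hpq, hw₁, hb⟩ := hstep
    by_cases hr : r = 1
    · subst hr
      right
      exact ⟨p, ⟨q, hpq⟩, by rw [hw₁, mul_one]⟩
    · obtain ⟨r', z, rfl⟩ := exists_concat hr
      have hx : p * r' = s ∧ z = x := concat_inj (by rw [mul_assoc, ← hw₁, hs])
      rcases ih x (q * r') (by rw [hb, hx.2, mul_assoc]) with ⟨t, ht, hch⟩ | ⟨p₀, hp₀, hch⟩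
      · left
        refine ⟨t, ht, Relation.ReflTransGen.head ?_ hch⟩
        rw [← hx.1]
        exact ⟨p, q, r', hpq, rfl, rfl⟩
      · right
        exact ⟨p₀, hp₀, Relation.ReflTransGen.head ⟨p, q, _, hpq, hw₁, hb⟩ hch⟩

end RcGenAux

/-- Let `H ⊆ Ω* × Ω*` be finite and symmetric and `ρ = ⟨H⟩`.  If the quadruple
`(a,u;b,v)` is irreducible with respect to `ρ`, then `au` is ρ-related to `a`,
to `b`, or to some `c` with `(c,d) ∈ H` for some `d`. -/
theorem irreducibleQuad_related (Ω : Type*)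
    (H : Set (FreeMonoid Ω × FreeMonoid Ω)) (hfin : H.Finite)
    (hsym : ∀ p : FreeMonoid Ω × FreeMonoid Ω, p ∈ H → (p.2, p.1) ∈ H)
    (a u b v : FreeMonoid Ω) (hirr : IrreducibleQuad (rcGen H) a u b v) :
    ∃ w ∈ ({a, b} ∪ {c : FreeMonoid Ω | ∃ d : FreeMonoid Ω, (c, d) ∈ H} :
        Set (FreeMonoid Ω)), (a * u, w) ∈ rcGen H := by
  obtain ⟨hmem, hred⟩ := hirr
  have hrc := RcGenAux.rcGen_eq H hsym
  by_cases hu : u = 1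
  · refine ⟨a, Or.inl (Set.mem_insert _ _), ?_⟩
    rw [hu, mul_one, hrc]
    exact Relation.ReflTransGen.refl
  by_cases hv : v = 1
  · refine ⟨b, Or.inl (Set.mem_insert_of_mem _ rfl), ?_⟩
    rw [hv, mul_one] at hmem
    exact hmem
  obtain ⟨u', x, rfl⟩ := RcGenAux.exists_concat hu
  obtain ⟨v', y, rfl⟩ := RcGenAux.exists_concat hv
  have hC : Relation.ReflTransGen (RcGenAux.step H) (a * (u' * FreeMonoid.of x))
      (b * (v' * FreeMonoid.of y)) := by
    rw [hrc] at hmem; exact hmem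
  rcases RcGenAux.key H hC x (a * u') (by rw [mul_assoc]) with ⟨t, ht, hch⟩ | ⟨p, hp, hch⟩
  · exfalso
    have h2 : b * v' = t ∧ y = x := RcGenAux.concat_inj (by rw [mul_assoc]; exact ht)
    refine hred (FreeMonoid.of x) u' v' (RcGenAux.of_ne_one x) rfl (by rw [← h2.2]) ?_
    rw [hrc]
    rw [h2.1]
    exact hch
  · refine ⟨p, Or.inr hp, ?_⟩
    rw [hrc]
    exact hch
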